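/- Let H₊ and H₋ be complex Hilbert spaces and H = H₊ × H₋ with its standard form ω. (1) For any two maximal completely positive-definite closed subspaces M and N of H there exists a continuous linear bijection Φ : H → H with ω(Φx, Φy) = ω(x,y) for all x, y ∈ H and Φ(M) = N. (2) If Φ : H → H is a continuous linear bijection with ω(Φx, Φy) = ω(x,y) for all x, y and Φ(H₊ × {0}) = H₊ × {0}, then there exist unitary operators g₁₁ on H₊ and g₂₂ on H₋ such that Φ(x₁, x₂) = (g₁₁ x₁, g₂₂ x₂) for all (x₁, x₂) ∈ H. -/

import Mathlib

set_option maxHeartbeats 4000000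
set_option synthInstance.maxHeartbeats 400000


noncomputable section

open Complex
open scoped ComplexInnerProductSpace

open ContinuousLinearMap in
lemma aux_sqrt {E F : Type*} [NormedAddCommGroup E] [InnerProductSpace ℂ E] [CompleteSpace E]
    [NormedAddCommGroup F] [InnerProductSpace ℂ F] [CompleteSpace F]
    (K : E →L[ℂ] F) (hK : ‖K‖ < 1) :
    ∃ S P : E →L[ℂ] E, IsSelfAdjoint S ∧ S * S = P ∧
      P * (1 - (adjoint K ∘L K)) = 1 ∧ (1 - (adjoint K ∘L K)) * P = 1 ∧
      S * (1 - (adjoint K ∘L K)) = (1 - (adjoint K ∘L K)) * S := by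
  have hnorm : ‖adjoint K ∘L K‖ < 1 := by
    rw [norm_adjoint_comp_self]; nlinarith [norm_nonneg K]
  set u : (E →L[ℂ] E)ˣ := Units.oneSub _ hnorm with hu
  set A : E →L[ℂ] E := 1 - (adjoint K ∘L K) with hAdef
  have hA : (u : E →L[ℂ] E) = A := rfl
  set P : E →L[ℂ] E := ((u⁻¹ : (E →L[ℂ] E)ˣ) : E →L[ℂ] E) with hP
  have hPA : P * A = 1 := by rw [← hA]; exact u.inv_mul
  have hAP : A * P = 1 := by rw [← hA]; exact u.mul_inv
  have hKK : IsSelfAdjoint (adjoint K ∘L K) := by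
    rw [isSelfAdjoint_iff', adjoint_comp, adjoint_adjoint]
  have hAsa : IsSelfAdjoint A := by
    simpa [hAdef] using (IsSelfAdjoint.one (R := E →L[ℂ] E)).sub hKK
  have hApos : (0 : E →L[ℂ] E) ≤ A := by
    rw [nonneg_iff_isPositive]
    refine ⟨isSelfAdjoint_iff_isSymmetric.mp hAsa, fun x => ?_⟩
    have h2 : ⟪A x, x⟫ = ⟪x, x⟫ - ⟪K x, K x⟫ := by
      have h1 : A x = x - adjoint K (K x) := by simp [hAdef]
      rw [h1, inner_sub_left, adjoint_inner_left]
    have h3 : ‖K x‖ ≤ ‖x‖ := by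
      calc ‖K x‖ ≤ ‖K‖ * ‖x‖ := K.le_opNorm x
      _ ≤ 1 * ‖x‖ := mul_le_mul_of_nonneg_right hK.le (norm_nonneg x)
      _ = ‖x‖ := one_mul _
    rw [reApplyInnerSelf_apply, h2]
    simp only [map_sub, inner_self_eq_norm_sq]
    nlinarith [norm_nonneg x, norm_nonneg (K x)]
  have h1 : A * star P = 1 := by
    have := congrArg star hPA
    rwa [star_mul, star_one, hAsa.star_eq] at this
  have hPsa : IsSelfAdjoint P := by
    show star P = P
    calc star P = (P * A) * star P := by rw [hPA, one_mul]
    _ = P * (A * star P) := mul_assoc _ _ _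
    _ = P := by rw [h1, mul_one]
  have hPpos : (0 : E →L[ℂ] E) ≤ P := by
    have h2 : star P * A * P = P := by
      rw [hPsa.star_eq, mul_assoc, hAP, mul_one]
    have := star_left_conjugate_nonneg hApos P
    rwa [h2] at this
  set S : E →L[ℂ] E := CFC.sqrt P with hSdef
  have h : S * S = P := CFC.sqrt_mul_sqrt_self P hPpos
  refine ⟨S, P, (CFC.sqrt_nonneg P).isSelfAdjoint, h, hPA, hAP, ?_⟩
  have hSP : Commute S P := by
    rw [Commute, SemiconjBy, ← h, mul_assoc]
  have hcom : Commute S A := by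
    have h2 : Commute S ((u⁻¹ : (E →L[ℂ] E)ˣ) : E →L[ℂ] E) := hSP
    have h3 := h2.units_inv_right (u := u⁻¹)
    rw [inv_inv, hA] at h3
    exact h3
  exact hcom.eq


variable {Hp Hm : Type*}
  [NormedAddCommGroup Hp] [InnerProductSpace ℂ Hp] [CompleteSpace Hp]
  [NormedAddCommGroup Hm] [InnerProductSpace ℂ Hm] [CompleteSpace Hm]

/-- The standard strong symplectic form `ω((x₁,x₂),(y₁,y₂)) = i⟨x₁,y₁⟩ − i⟨x₂,y₂⟩` on
`H₊ × H₋`, linear in the first argument and conjugate-linear in the second.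
(Since Mathlib's `inner` is conjugate-linear in its *first* argument, the paper's
`⟨a,b⟩` is `inner b a`.) -/
def stdForm (x y : Hp × Hm) : ℂ :=
  Complex.I * (inner ℂ y.1 x.1 : ℂ) - Complex.I * (inner ℂ y.2 x.2 : ℂ)

/-- `M` is a completely positive-definite closed subspace. -/
def IsCPD (M : Submodule ℂ (Hp × Hm)) : Prop :=
  IsClosed (M : Set (Hp × Hm)) ∧
    ∃ c : ℝ, 0 < c ∧ ∀ x ∈ M, c * ‖x‖ ^ 2 ≤ (-Complex.I * stdForm x x).re

/-- `M` is a maximal completely positive-definite subspace. -/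
def IsMaxCPD (M : Submodule ℂ (Hp × Hm)) : Prop :=
  IsCPD M ∧ ∀ N : Submodule ℂ (Hp × Hm), IsCPD N → M ≤ N → N = M

lemma stdForm_re (x : Hp × Hm) : (-Complex.I * stdForm x x).re = ‖x.1‖ ^ 2 - ‖x.2‖ ^ 2 := by
  have h : -Complex.I * stdForm x x = (inner ℂ x.1 x.1 : ℂ) - (inner ℂ x.2 x.2 : ℂ) := by
    simp only [stdForm]
    linear_combination ((inner ℂ x.2 x.2 : ℂ) - (inner ℂ x.1 x.1 : ℂ)) * Complex.I_mul_I
  rw [h, Complex.sub_re, ← RCLike.re_to_complex, ← RCLike.re_to_complex,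
    inner_self_eq_norm_sq, inner_self_eq_norm_sq]

lemma sq_max_le {a b : ℝ} (ha : 0 ≤ a) (hb : 0 ≤ b) : (max a b) ^ 2 ≤ a ^ 2 + b ^ 2 := by
  rcases max_choice a b with h | h <;> rw [h] <;> nlinarith

lemma sq_le_sq_max_left {a b : ℝ} (ha : 0 ≤ a) (hb : 0 ≤ b) : a ^ 2 ≤ (max a b) ^ 2 := by
  have := le_max_left a b
  nlinarith [le_max_left a b, le_max_right a b]

lemma sq_le_sq_max_right {a b : ℝ} (ha : 0 ≤ a) (hb : 0 ≤ b) : b ^ 2 ≤ (max a b) ^ 2 := by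
  nlinarith [le_max_left a b, le_max_right a b]


open ContinuousLinearMap in
lemma graph_pseudo (K : Hp →L[ℂ] Hm) (hK : ‖K‖ < 1) :
    ∃ Φ Ψ : (Hp × Hm) →L[ℂ] (Hp × Hm),
      (∀ x, Ψ (Φ x) = x) ∧ (∀ x, Φ (Ψ x) = x) ∧
      (∀ x y, stdForm (Φ x) (Φ y) = stdForm x y) ∧
      Φ '' {p : Hp × Hm | p.2 = 0} = {p : Hp × Hm | p.2 = K p.1} := by
  obtain ⟨S, P, hSsa, hS2, hPA, hAP, hSA⟩ := aux_sqrt K hK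
  have hKadj : ‖adjoint K‖ < 1 := by
    rwa [show ‖adjoint K‖ = ‖K‖ from LinearIsometryEquiv.norm_map _ K]
  obtain ⟨S', Q, hS'sa, hS'2, hQB, hBQ, hS'B⟩ := aux_sqrt (adjoint K) hKadj
  rw [adjoint_adjoint] at hQB hBQ hS'B
  set A : Hp →L[ℂ] Hp := 1 - (adjoint K ∘L K) with hAdef
  set B : Hm →L[ℂ] Hm := 1 - (K ∘L adjoint K) with hBdef
  -- pointwise facts
  have pa : ∀ v, P (A v) = v := fun v => by
    simpa [ContinuousLinearMap.mul_apply] using DFunLike.congr_fun hPA v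
  have ap : ∀ v, A (P v) = v := fun v => by
    simpa [ContinuousLinearMap.mul_apply] using DFunLike.congr_fun hAP v
  have s2 : ∀ v, S (S v) = P v := fun v => by
    simpa [ContinuousLinearMap.mul_apply] using DFunLike.congr_fun hS2 v
  have qb : ∀ w, Q (B w) = w := fun w => by
    simpa [ContinuousLinearMap.mul_apply] using DFunLike.congr_fun hQB w
  have bq : ∀ w, B (Q w) = w := fun w => by
    simpa [ContinuousLinearMap.mul_apply] using DFunLike.congr_fun hBQ w
  have s'2 : ∀ w, S' (S' w) = Q w := fun w => by
    simpa [ContinuousLinearMap.mul_apply] using DFunLike.congr_fun hS'2 w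
  have hSAS : S * (A * S) = 1 := by
    rw [← mul_assoc, hSA, mul_assoc, hS2, hAP]
  have f1 : ∀ v, S (A (S v)) = v := fun v => by
    simpa [ContinuousLinearMap.mul_apply] using DFunLike.congr_fun hSAS v
  have hS'BS' : S' * (B * S') = 1 := by
    rw [← mul_assoc, hS'B, mul_assoc, hS'2, hBQ]
  have f1' : ∀ w, S' (B (S' w)) = w := fun w => by
    simpa [ContinuousLinearMap.mul_apply] using DFunLike.congr_fun hS'BS' w
  have hAv : ∀ v, A v = v - adjoint K (K v) := by
    intro v; simp [hAdef]
  have hBw : ∀ w, B w = w - K (adjoint K w) := by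
    intro w; simp [hBdef]
  have hBK : ∀ v, B (K v) = K (A v) := by
    intro v; rw [hAv, hBw, map_sub]
  have hAK : ∀ w, A (adjoint K w) = adjoint K (B w) := by
    intro w; rw [hAv, hBw, map_sub]
  have f5 : ∀ v, K (P v) = Q (K v) := by
    intro v
    have h1 : B (K (P v)) = K v := by rw [hBK, ap]
    calc K (P v) = Q (B (K (P v))) := (qb _).symm
    _ = Q (K v) := by rw [h1]
  have f6 : ∀ w, P (adjoint K w) = adjoint K (Q w) := by
    intro w
    calc P (adjoint K w) = P (adjoint K (B (Q w))) := by rw [bq]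
    _ = P (A (adjoint K (Q w))) := by rw [hAK]
    _ = adjoint K (Q w) := pa _
  -- the maps
  set Φ : (Hp × Hm) →L[ℂ] (Hp × Hm) :=
    (S ∘L fst ℂ Hp Hm + (adjoint K ∘L S') ∘L snd ℂ Hp Hm).prod
      ((K ∘L S) ∘L fst ℂ Hp Hm + S' ∘L snd ℂ Hp Hm) with hΦdef
  set Ψ : (Hp × Hm) →L[ℂ] (Hp × Hm) :=
    (S ∘L fst ℂ Hp Hm - (S ∘L adjoint K) ∘L snd ℂ Hp Hm).prod
      (S' ∘L snd ℂ Hp Hm - (S' ∘L K) ∘L fst ℂ Hp Hm) with hΨdef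
  have hΦ : ∀ x : Hp × Hm, Φ x = (S x.1 + adjoint K (S' x.2), K (S x.1) + S' x.2) := by
    intro x; simp [hΦdef]
  have hΨ : ∀ x : Hp × Hm, Ψ x = (S x.1 - S (adjoint K x.2), S' x.2 - S' (K x.1)) := by
    intro x; simp [hΨdef]
  have li : ∀ x, Ψ (Φ x) = x := by
    intro x
    rw [hΦ x, hΨ _]
    have e1 : S (S x.1 + adjoint K (S' x.2)) - S (adjoint K (K (S x.1) + S' x.2)) = x.1 := by
      rw [map_add, map_add, map_add]
      have h2 : S (S x.1) - S (adjoint K (K (S x.1))) = x.1 := by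
        rw [← map_sub, ← hAv, f1]
      calc S (S x.1) + S (adjoint K (S' x.2)) -
          (S (adjoint K (K (S x.1))) + S (adjoint K (S' x.2)))
          = S (S x.1) - S (adjoint K (K (S x.1))) := by abel
      _ = x.1 := h2
    have e2 : S' (K (S x.1) + S' x.2) - S' (K (S x.1 + adjoint K (S' x.2))) = x.2 := by
      rw [map_add, map_add, map_add]
      have h2 : S' (S' x.2) - S' (K (adjoint K (S' x.2))) = x.2 := by
        rw [← map_sub, ← hBw, f1']
      calc S' (K (S x.1)) + S' (S' x.2) -
          (S' (K (S x.1)) + S' (K (adjoint K (S' x.2))))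
          = S' (S' x.2) - S' (K (adjoint K (S' x.2))) := by abel
      _ = x.2 := h2
    exact Prod.ext e1 e2
  have ri : ∀ x, Φ (Ψ x) = x := by
    intro x
    rw [hΨ x, hΦ _]
    have e1 : S (S x.1 - S (adjoint K x.2)) + adjoint K (S' (S' x.2 - S' (K x.1))) = x.1 := by
      rw [map_sub, map_sub, map_sub]
      rw [s2, s2, s'2, s'2, f6, ← f5]
      have h2 : P x.1 - adjoint K (K (P x.1)) = x.1 := by
        rw [← hAv, ap]
      calc P x.1 - adjoint K (Q x.2) + (adjoint K (Q x.2) - adjoint K (K (P x.1)))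
          = P x.1 - adjoint K (K (P x.1)) := by abel
      _ = x.1 := h2
    have e2 : K (S (S x.1 - S (adjoint K x.2))) + S' (S' x.2 - S' (K x.1)) = x.2 := by
      rw [map_sub, map_sub, map_sub]
      rw [s2, s2, s'2, s'2, f5, f5]
      have h2 : Q x.2 - Q (K (adjoint K x.2)) = x.2 := by
        rw [← map_sub, ← hBw, qb]
      calc Q (K x.1) - Q (K (adjoint K x.2)) + (Q x.2 - Q (K x.1))
          = Q x.2 - Q (K (adjoint K x.2)) := by abel
      _ = x.2 := h2
    exact Prod.ext e1 e2
  -- form preservation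
  have hSsym := isSelfAdjoint_iff_isSymmetric.mp hSsa
  have hS'sym := isSelfAdjoint_iff_isSymmetric.mp hS'sa
  have g1 : ∀ u v : Hp, (inner ℂ (S u) (S v) : ℂ) - inner ℂ (K (S u)) (K (S v)) = inner ℂ u v := by
    intro u v
    have h1 : (inner ℂ (S u) (S v) : ℂ) = inner ℂ u (S (S v)) := hSsym u (S v)
    have h2 : (inner ℂ (K (S u)) (K (S v)) : ℂ) = inner ℂ u (S (adjoint K (K (S v)))) := by
      rw [← adjoint_inner_right]
      exact hSsym u _
    rw [h1, h2, ← inner_sub_right]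
    have h3 : S (S v) - S (adjoint K (K (S v))) = v := by
      rw [← map_sub, ← hAv, f1]
    rw [h3]
  have g2 : ∀ u v : Hm,
      (inner ℂ (adjoint K (S' u)) (adjoint K (S' v)) : ℂ) - inner ℂ (S' u) (S' v) = - inner ℂ u v := by
    intro u v
    have h1 : (inner ℂ (adjoint K (S' u)) (adjoint K (S' v)) : ℂ)
        = inner ℂ (S' u) (K (adjoint K (S' v))) := adjoint_inner_left K _ _
    rw [h1, ← inner_sub_right]
    have h3 : K (adjoint K (S' v)) - S' v = -(B (S' v)) := by
      rw [hBw]; abel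
    rw [h3, inner_neg_right]
    have h4 : (inner ℂ (S' u) (B (S' v)) : ℂ) = inner ℂ u (S' (B (S' v))) := hS'sym u _
    rw [h4, f1']
  have g3 : ∀ (u : Hp) (w : Hm),
      (inner ℂ (S u) (adjoint K (S' w)) : ℂ) = inner ℂ (K (S u)) (S' w) :=
    fun u w => adjoint_inner_right K _ _
  have g4 : ∀ (w : Hm) (u : Hp),
      (inner ℂ (adjoint K (S' w)) (S u) : ℂ) = inner ℂ (S' w) (K (S u)) :=
    fun w u => adjoint_inner_left K _ _
  have fp : ∀ x y, stdForm (Φ x) (Φ y) = stdForm x y := by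
    intro x y
    rw [hΦ x, hΦ y]
    simp only [stdForm, inner_add_left, inner_add_right]
    linear_combination Complex.I * (g1 y.1 x.1) + Complex.I * (g2 y.2 x.2) +
      Complex.I * (g3 y.1 x.2) + Complex.I * (g4 y.2 x.1)
  -- image
  have himg : Φ '' {p : Hp × Hm | p.2 = 0} = {p : Hp × Hm | p.2 = K p.1} := by
    ext p
    constructor
    · rintro ⟨q, hq, rfl⟩
      have hq2 : q.2 = 0 := hq
      rw [hΦ q]
      show K (S q.1) + S' q.2 = K (S q.1 + adjoint K (S' q.2))
      rw [hq2]
      simp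
    · intro hp
      have hp2 : p.2 = K p.1 := hp
      refine ⟨(S (A p.1), 0), rfl, ?_⟩
      rw [hΦ _]
      show (S (S (A p.1)) + adjoint K (S' 0), K (S (S (A p.1))) + S' 0) = p
      rw [s2, pa]
      simp only [map_zero, add_zero]
      exact Prod.ext rfl hp2.symm
  exact ⟨Φ, Ψ, li, ri, fp, himg⟩

open ContinuousLinearMap in
lemma maxCPD_graph (M : Submodule ℂ (Hp × Hm)) (hM : IsMaxCPD M) :
    ∃ K : Hp →L[ℂ] Hm, ‖K‖ < 1 ∧ (M : Set (Hp × Hm)) = {p | p.2 = K p.1} := by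
  obtain ⟨⟨hMcl, c, hc, hineq⟩, hmax⟩ := hM
  have key : ∀ x ∈ M, c * ‖x‖ ^ 2 ≤ ‖x.1‖ ^ 2 - ‖x.2‖ ^ 2 := by
    intro x hx
    have h := hineq x hx
    rwa [stdForm_re] at h
  haveI : CompleteSpace M := hMcl.completeSpace_coe
  set π : M →L[ℂ] Hp := (fst ℂ Hp Hm).comp M.subtypeL with hπ
  have hπapp : ∀ x : M, π x = (x : Hp × Hm).1 := fun x => rfl
  have hsqc : 0 < Real.sqrt c := Real.sqrt_pos.mpr hc
  have hlow : ∀ x : M, ‖x‖ ≤ (Real.sqrt c)⁻¹ * ‖π x‖ := by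
    intro x
    have h1 : c * ‖(x : Hp × Hm)‖ ^ 2 ≤ ‖π x‖ ^ 2 := by
      have h2 := key x x.2
      have h3 : (0:ℝ) ≤ ‖(x : Hp × Hm).2‖ ^ 2 := sq_nonneg _
      rw [hπapp]
      nlinarith
    have h4 : Real.sqrt c * ‖x‖ ≤ ‖π x‖ := by
      have h5 : Real.sqrt (c * ‖(x : Hp × Hm)‖ ^ 2) ≤ Real.sqrt (‖π x‖ ^ 2) :=
        Real.sqrt_le_sqrt h1
      rwa [Real.sqrt_mul hc.le, Real.sqrt_sq (norm_nonneg _),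
        Real.sqrt_sq (norm_nonneg _)] at h5
    calc ‖x‖ = (Real.sqrt c)⁻¹ * (Real.sqrt c * ‖x‖) := by
          field_simp
    _ ≤ (Real.sqrt c)⁻¹ * ‖π x‖ := by
          exact mul_le_mul_of_nonneg_left h4 (by positivity)
  have hanti : AntilipschitzWith ((Real.sqrt c)⁻¹.toNNReal) π :=
    π.antilipschitz_of_bound (fun x => by
      rw [Real.coe_toNNReal _ (by positivity)]; exact hlow x)
  have hker : LinearMap.ker (π : M →ₗ[ℂ] Hp) = ⊥ := LinearMap.ker_eq_bot (f := (π : M →ₗ[ℂ] Hp)).mpr hanti.injective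
  have hrange : LinearMap.range (π : M →ₗ[ℂ] Hp) = ⊤ := by
    set D := LinearMap.range (π : M →ₗ[ℂ] Hp) with hD
    have hDcl : IsClosed (D : Set Hp) := by
      have := hanti.isClosed_range π.uniformContinuous
      rwa [hD, LinearMap.coe_range]
    by_contra hDne
    haveI : CompleteSpace D := hDcl.completeSpace_coe
    have hOrth : Dᗮ ≠ ⊥ := fun h => hDne (Submodule.orthogonal_eq_bot_iff.mp h)
    obtain ⟨e, heD, hene⟩ := Submodule.ne_bot_iff _ |>.mp hOrth
    set v : Hp × Hm := ((e : Hp), (0 : Hm)) with hv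
    set c' := min (c / 2) 1 with hc'def
    have hc' : 0 < c' := lt_min (by linarith) one_pos
    set N0 := M ⊔ (ℂ ∙ v) with hN0
    have hstep : ∀ y ∈ N0, c' * ‖y‖ ^ 2 ≤ ‖y.1‖ ^ 2 - ‖y.2‖ ^ 2 := by
      intro y hy
      rw [hN0, Submodule.mem_sup] at hy
      obtain ⟨m, hm, z, hz, rfl⟩ := hy
      rw [Submodule.mem_span_singleton] at hz
      obtain ⟨t, rfl⟩ := hz
      have h1 : (m + t • v).1 = m.1 + t • e := by simp [hv]
      have h2 : (m + t • v).2 = m.2 := by simp [hv]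
      have horth : (inner ℂ m.1 (t • e) : ℂ) = 0 := by
        have hmD : m.1 ∈ D := ⟨⟨m, hm⟩, rfl⟩
        have h3 := (Submodule.mem_orthogonal D e).mp heD m.1 hmD
        rw [inner_smul_right, h3, mul_zero]
      have hnorm1 : ‖m.1 + t • e‖ ^ 2 = ‖m.1‖ ^ 2 + ‖t • e‖ ^ 2 := by
        rw [norm_add_sq (𝕜 := ℂ), horth]
        simp
      have hkey := key m hm
      rw [Prod.norm_def] at hkey
      rw [Prod.norm_def, h1, h2, hnorm1]
      have hmax1 := sq_le_sq_max_left (norm_nonneg m.1) (norm_nonneg m.2)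
      have hmax2 := sq_le_sq_max_right (norm_nonneg m.1) (norm_nonneg m.2)
      have hymax : (max ‖m.1 + t • e‖ ‖m.2‖) ^ 2 ≤ ‖m.1 + t • e‖ ^ 2 + ‖m.2‖ ^ 2 :=
        sq_max_le (norm_nonneg _) (norm_nonneg _)
      rw [hnorm1] at hymax
      have hle1 : c' ≤ c / 2 := min_le_left _ _
      have hle2 : c' ≤ 1 := min_le_right _ _
      have hy2 : c' * (max ‖m.1 + t • e‖ ‖m.2‖) ^ 2
          ≤ c' * (‖m.1‖ ^ 2 + ‖t • e‖ ^ 2 + ‖m.2‖ ^ 2) := by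
        apply mul_le_mul_of_nonneg_left _ hc'.le
        linarith
      have hsum : (0:ℝ) ≤ ‖m.1‖ ^ 2 + ‖m.2‖ ^ 2 := by positivity
      have hprod1 : c' * (‖m.1‖ ^ 2 + ‖m.2‖ ^ 2) ≤ (c / 2) * (‖m.1‖ ^ 2 + ‖m.2‖ ^ 2) :=
        mul_le_mul_of_nonneg_right hle1 hsum
      have hprod2 : (c / 2) * (‖m.1‖ ^ 2 + ‖m.2‖ ^ 2)
          ≤ c * (max ‖m.1‖ ‖m.2‖) ^ 2 := by nlinarith
      have hprod3 : c' * ‖t • e‖ ^ 2 ≤ ‖t • e‖ ^ 2 := by nlinarith [sq_nonneg ‖t • e‖]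
      nlinarith
    set N := N0.topologicalClosure with hN
    have hNcpd : IsCPD N := by
      refine ⟨N0.isClosed_topologicalClosure, c', hc', ?_⟩
      intro x hx
      rw [stdForm_re]
      have hcl : IsClosed {x : Hp × Hm | c' * ‖x‖ ^ 2 ≤ ‖x.1‖ ^ 2 - ‖x.2‖ ^ 2} := by
        apply isClosed_le
        · exact (continuous_const.mul ((continuous_norm).pow 2))
        · exact ((continuous_fst.norm).pow 2).sub ((continuous_snd.norm).pow 2)
      have hsub : (N0 : Set (Hp × Hm)) ⊆ {x | c' * ‖x‖ ^ 2 ≤ ‖x.1‖ ^ 2 - ‖x.2‖ ^ 2} := hstep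
      have : (N : Set (Hp × Hm)) ⊆ {x | c' * ‖x‖ ^ 2 ≤ ‖x.1‖ ^ 2 - ‖x.2‖ ^ 2} := by
        rw [hN, Submodule.topologicalClosure_coe]
        exact closure_minimal hsub hcl
      exact this hx
    have hMN : M ≤ N := le_trans le_sup_left N0.le_topologicalClosure
    have hNM := hmax N hNcpd hMN
    have hvN : v ∈ N :=
      N0.le_topologicalClosure (Submodule.mem_sup_right (Submodule.mem_span_singleton_self v))
    rw [hNM] at hvN
    have heDmem : e ∈ D := ⟨⟨v, hvN⟩, rfl⟩
    have : (inner ℂ e e : ℂ) = 0 := (Submodule.mem_orthogonal D e).mp heD e heDmem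
    exact hene (inner_self_eq_zero.mp this)
  set eqv := ContinuousLinearEquiv.ofBijective π hker hrange with heqv
  set K : Hp →L[ℂ] Hm :=
    (snd ℂ Hp Hm) ∘L (M.subtypeL ∘L (eqv.symm : Hp →L[ℂ] M)) with hKdef
  have hmem : ∀ u : Hp, (u, K u) ∈ M := by
    intro u
    have h1 : ((eqv.symm u : M) : Hp × Hm).1 = u := eqv.apply_symm_apply u
    have h3 : (u, K u) = ((eqv.symm u : M) : Hp × Hm) := by
      refine Prod.ext h1.symm rfl
    rw [h3]
    exact (eqv.symm u : M).2
  have hKbound : ∀ u : Hp, ‖K u‖ ≤ Real.sqrt (1 / (1 + c)) * ‖u‖ := by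
    intro u
    have h1 := key (u, K u) (hmem u)
    rw [Prod.norm_def] at h1
    have h2 : c * ‖K u‖ ^ 2 ≤ ‖u‖ ^ 2 - ‖K u‖ ^ 2 := by
      have := sq_le_sq_max_right (norm_nonneg u) (norm_nonneg (K u))
      nlinarith
    have h3 : ‖K u‖ ^ 2 ≤ (1 / (1 + c)) * ‖u‖ ^ 2 := by
      rw [div_mul_eq_mul_div, le_div_iff₀ (by linarith)]
      nlinarith
    have h4 : ‖K u‖ ^ 2 ≤ (Real.sqrt (1 / (1 + c)) * ‖u‖) ^ 2 := by
      rw [mul_pow, Real.sq_sqrt (by positivity)]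
      exact h3
    have h5 : (0:ℝ) ≤ Real.sqrt (1 / (1 + c)) * ‖u‖ := by positivity
    nlinarith [norm_nonneg (K u)]
  have hr1 : Real.sqrt (1 / (1 + c)) < 1 := by
    have hlt : 1 / (1 + c) < 1 := by
      rw [div_lt_one (by linarith)]; linarith
    nlinarith [Real.sq_sqrt (show (0:ℝ) ≤ 1 / (1 + c) by positivity),
      Real.sqrt_nonneg (1 / (1 + c))]
  refine ⟨K, ?_, ?_⟩
  · calc ‖K‖ ≤ Real.sqrt (1 / (1 + c)) :=
        K.opNorm_le_bound (Real.sqrt_nonneg _) hKbound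
    _ < 1 := hr1
  · ext p
    simp only [SetLike.mem_coe, Set.mem_setOf_eq]
    constructor
    · intro hp
      have h0 := hmem p.1
      have hdiff : ((0 : Hp), p.2 - K p.1) ∈ M := by
        have h1 : p - (p.1, K p.1) = ((0 : Hp), p.2 - K p.1) := by
          ext <;> simp
        rw [← h1]
        exact sub_mem hp h0
      have h2 := key _ hdiff
      simp only [norm_zero] at h2
      have h3 : ‖p.2 - K p.1‖ ^ 2 ≤ 0 := by nlinarith [sq_nonneg ‖((0:Hp), p.2 - K p.1)‖]
      have h4 : ‖p.2 - K p.1‖ = 0 := by nlinarith [norm_nonneg (p.2 - K p.1)]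
      have h5 := norm_eq_zero.mp h4
      exact sub_eq_zero.mp h5
    · intro hp
      have : p = (p.1, K p.1) := Prod.ext rfl hp
      rw [this]
      exact hmem p.1

/-- (1) The group of continuous linear automorphisms of `H₊ × H₋` preserving the standard
form acts transitively on maximal completely positive-definite subspaces.
(2) Any form-preserving continuous linear automorphism fixing `H₊ × {0}` is block-diagonal
with unitary blocks. -/
theorem statement3 :
    (∀ M N : Submodule ℂ (Hp × Hm), IsMaxCPD M → IsMaxCPD N →
      ∃ Φ : (Hp × Hm) →L[ℂ] (Hp × Hm), Function.Bijective Φ ∧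
        (∀ x y : Hp × Hm, stdForm (Φ x) (Φ y) = stdForm x y) ∧
        Φ '' (M : Set (Hp × Hm)) = (N : Set (Hp × Hm))) ∧
    (∀ Φ : (Hp × Hm) →L[ℂ] (Hp × Hm), Function.Bijective Φ →
      (∀ x y : Hp × Hm, stdForm (Φ x) (Φ y) = stdForm x y) →
      Φ '' {p : Hp × Hm | p.2 = 0} = {p : Hp × Hm | p.2 = 0} →
      ∃ (g₁ : Hp ≃ₗᵢ[ℂ] Hp) (g₂ : Hm ≃ₗᵢ[ℂ] Hm),
        ∀ x : Hp × Hm, Φ x = (g₁ x.1, g₂ x.2)) := by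
  constructor
  · intro M N hM hN
    obtain ⟨K, hK, hMK⟩ := maxCPD_graph M hM
    obtain ⟨L, hL, hNL⟩ := maxCPD_graph N hN
    obtain ⟨ΦK, ΨK, liK, riK, fpK, imK⟩ := graph_pseudo K hK
    obtain ⟨ΦL, ΨL, liL, riL, fpL, imL⟩ := graph_pseudo L hL
    have fpΨK : ∀ a b, stdForm (ΨK a) (ΨK b) = stdForm a b := by
      intro a b
      have h := fpK (ΨK a) (ΨK b)
      rw [riK, riK] at h
      exact h.symm
    refine ⟨ΦL.comp ΨK, ⟨?_, ?_⟩, ?_, ?_⟩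
    · intro x y hxy
      rw [ContinuousLinearMap.comp_apply, ContinuousLinearMap.comp_apply] at hxy
      have h1 := congrArg ΨL hxy
      rw [liL, liL] at h1
      calc x = ΦK (ΨK x) := (riK x).symm
      _ = ΦK (ΨK y) := by rw [h1]
      _ = y := riK y
    · intro y
      refine ⟨ΦK (ΨL y), ?_⟩
      rw [ContinuousLinearMap.comp_apply, liK, riL]
    · intro x y
      rw [ContinuousLinearMap.comp_apply, ContinuousLinearMap.comp_apply, fpL, fpΨK]
    · have h0 : ΨK '' (ΦK '' {p : Hp × Hm | p.2 = 0}) = {p : Hp × Hm | p.2 = 0} := by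
        rw [← Set.image_comp]
        have : (⇑ΨK ∘ ⇑ΦK) = (fun z => z) := funext liK
        rw [this, Set.image_id']
      calc (ΦL.comp ΨK) '' (M : Set (Hp × Hm)) = ΦL '' (ΨK '' (M : Set (Hp × Hm))) := by
            rw [ContinuousLinearMap.coe_comp', Set.image_comp]
      _ = ΦL '' (ΨK '' (ΦK '' {p : Hp × Hm | p.2 = 0})) := by rw [hMK, ← imK]
      _ = ΦL '' {p : Hp × Hm | p.2 = 0} := by rw [h0]
      _ = (N : Set (Hp × Hm)) := by rw [imL, hNL]
  · intro Φ hbij hform himg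
    set aop : Hp →L[ℂ] Hp := (ContinuousLinearMap.fst ℂ Hp Hm) ∘L (Φ ∘L ContinuousLinearMap.inl ℂ Hp Hm) with haop
    set cop : Hp →L[ℂ] Hm := (ContinuousLinearMap.snd ℂ Hp Hm) ∘L (Φ ∘L ContinuousLinearMap.inl ℂ Hp Hm) with hcop
    set bop : Hm →L[ℂ] Hp := (ContinuousLinearMap.fst ℂ Hp Hm) ∘L (Φ ∘L ContinuousLinearMap.inr ℂ Hp Hm) with hbop
    set dop : Hm →L[ℂ] Hm := (ContinuousLinearMap.snd ℂ Hp Hm) ∘L (Φ ∘L ContinuousLinearMap.inr ℂ Hp Hm) with hdop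
    have happ : ∀ u : Hp, Φ (u, 0) = (aop u, cop u) := by
      intro u
      simp [haop, hcop]
    have happ' : ∀ w : Hm, Φ (0, w) = (bop w, dop w) := by
      intro w
      simp [hbop, hdop]
    have hc0 : ∀ u : Hp, cop u = 0 := by
      intro u
      have h1 : Φ (u, 0) ∈ Φ '' {p : Hp × Hm | p.2 = 0} :=
        Set.mem_image_of_mem _ (by simp)
      rw [himg] at h1
      have h2 : (Φ (u, 0)).2 = 0 := h1
      rwa [happ u] at h2
    have hsplit : ∀ x : Hp × Hm, Φ x = (aop x.1 + bop x.2, cop x.1 + dop x.2) := by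
      intro x
      have hx : (x.1, (0 : Hm)) + ((0 : Hp), x.2) = x := by
        ext <;> simp
      calc Φ x = Φ (x.1, 0) + Φ (0, x.2) := by rw [← map_add, hx]
      _ = (aop x.1, cop x.1) + (bop x.2, dop x.2) := by rw [happ, happ']
      _ = (aop x.1 + bop x.2, cop x.1 + dop x.2) := rfl
    have hform1 : ∀ u v : Hp, (inner ℂ (aop v) (aop u) : ℂ) = inner ℂ v u := by
      intro u v
      have h := hform (u, 0) (v, 0)
      rw [happ u, happ v] at h
      simp only [stdForm, hc0, inner_zero_left, inner_zero_right, mul_zero, sub_zero] at h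
      exact mul_left_cancel₀ Complex.I_ne_zero h
    have hainj : Function.Injective aop := by
      intro u v huv
      have h := hform1 (u - v) (u - v)
      rw [map_sub, huv, sub_self, inner_zero_left] at h
      exact sub_eq_zero.mp (inner_self_eq_zero.mp h.symm)
    have hasurj : Function.Surjective aop := by
      intro z
      have h1 : ((z, (0 : Hm)) : Hp × Hm) ∈ Φ '' {p : Hp × Hm | p.2 = 0} := by
        rw [himg]; simp
      obtain ⟨q, hq, hΦq⟩ := h1
      have hq2 : q.2 = 0 := hq
      have hq' : Φ (q.1, 0) = (z, 0) := by
        rw [show ((q.1, (0 : Hm)) : Hp × Hm) = q from Prod.ext rfl hq2.symm]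
        exact hΦq
      refine ⟨q.1, ?_⟩
      have := congrArg Prod.fst hq'
      rwa [happ q.1] at this
    have hb0 : ∀ w : Hm, bop w = 0 := by
      intro w
      have hz : ∀ v : Hp, (inner ℂ (aop v) (bop w) : ℂ) = 0 := by
        intro v
        have h := hform (0, w) (v, 0)
        rw [happ' w, happ v] at h
        simp only [stdForm, hc0, inner_zero_left, inner_zero_right, mul_zero,
          sub_zero, zero_sub, mul_eq_zero] at h
        rcases h with h | h
        · exact absurd h Complex.I_ne_zero
        · exact h
      obtain ⟨v, hv⟩ := hasurj (bop w)
      have := hz v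
      rw [hv] at this
      exact inner_self_eq_zero.mp this
    have hform2 : ∀ u v : Hm, (inner ℂ (dop v) (dop u) : ℂ) = inner ℂ v u := by
      intro u v
      have h := hform (0, u) (0, v)
      rw [happ' u, happ' v] at h
      simp only [stdForm, hb0, inner_zero_left, inner_zero_right, mul_zero,
        zero_sub, zero_mul, sub_zero] at h
      have h2 : (Complex.I * (inner ℂ (dop v) (dop u) : ℂ)) = Complex.I * inner ℂ v u := by
        have := neg_injective h
        exact this
      exact mul_left_cancel₀ Complex.I_ne_zero h2
    have hdsurj : Function.Surjective dop := by
      intro z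
      obtain ⟨q, hq⟩ := hbij.2 ((0 : Hp), z)
      rw [hsplit q] at hq
      have h1 : aop q.1 + bop q.2 = 0 := congrArg Prod.fst hq
      rw [hb0, add_zero] at h1
      have h2 : q.1 = 0 := hainj (by rw [h1, map_zero])
      have h3 : cop q.1 + dop q.2 = z := congrArg Prod.snd hq
      rw [hc0, zero_add] at h3
      exact ⟨q.2, h3⟩
    set aiso : Hp →ₗᵢ[ℂ] Hp :=
      (aop : Hp →ₗ[ℂ] Hp).isometryOfInner (fun x y => hform1 y x) with haiso
    set diso : Hm →ₗᵢ[ℂ] Hm :=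
      (dop : Hm →ₗ[ℂ] Hm).isometryOfInner (fun x y => hform2 y x) with hdiso
    have hasurj' : Function.Surjective aiso := by
      rw [haiso]
      intro z
      obtain ⟨v, hv⟩ := hasurj z
      exact ⟨v, by simpa using hv⟩
    have hdsurj' : Function.Surjective diso := by
      rw [hdiso]
      intro z
      obtain ⟨v, hv⟩ := hdsurj z
      exact ⟨v, by simpa using hv⟩
    refine ⟨LinearIsometryEquiv.ofSurjective aiso hasurj',
      LinearIsometryEquiv.ofSurjective diso hdsurj', ?_⟩
    intro x
    rw [hsplit x, hb0, hc0, add_zero, zero_add]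
    refine Prod.ext ?_ ?_
    · show aop x.1 = _
      rw [LinearIsometryEquiv.coe_ofSurjective]
      simp [haiso]
    · show dop x.2 = _
      rw [LinearIsometryEquiv.coe_ofSurjective]
      simp [hdiso]


end
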